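/- Let A be a real n×n matrix, B a real n×m matrix, K a real m×n matrix, P a symmetric real n×n matrix, and define M = (A−BK)ᵀP + P(A−BK), L = PBK, Λ = (A−BK)ᵀM + M(A−BK) + (A−BK)ᵀLᵀ + L(A−BK), Γ = (A−BK)ᵀL + MBK + LBK, and γ = LᵀBK + KᵀBᵀL. Let Ψ = [[A−BK, BK],[A−BK, BK]] and 𝒫 = [[P, 0],[0, 0]]. Then for any ξ_k ∈ ℝ^{2n} and t_k ∈ ℝ, the function V(t) = ξ(t)ᵀ 𝒫 ξ(t) with ξ(t) = exp(Ψ(t − t_k)) ξ_k is twice differentiable and its second derivative satisfies V''(t) = ξ(t)ᵀ [[Λ, Γ],[Γᵀ, γ]] ξ(t) for all t. -/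

import Mathlib

open Matrix NormedSpace

/-- Along the augmented trajectory `ξ(t) = exp(Ψ(t − t_k)) ξ_k`, the pseudo-Lyapunov function
`V(t) = ξ(t)ᵀ 𝒫 ξ(t)` is twice differentiable with second derivative
`V''(t) = ξ(t)ᵀ [[Λ, Γ],[Γᵀ, γ]] ξ(t)`. -/
theorem stmt_4 (n m : ℕ) (A : Matrix (Fin n) (Fin n) ℝ) (B : Matrix (Fin n) (Fin m) ℝ)
    (K : Matrix (Fin m) (Fin n) ℝ) (P : Matrix (Fin n) (Fin n) ℝ) (hP : Pᵀ = P)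
    (M L Lam Gam gam : Matrix (Fin n) (Fin n) ℝ)
    (hM : M = (A - B * K)ᵀ * P + P * (A - B * K)) (hL : L = P * B * K)
    (hLam : Lam = (A - B * K)ᵀ * M + M * (A - B * K) + (A - B * K)ᵀ * Lᵀ + L * (A - B * K))
    (hGam : Gam = (A - B * K)ᵀ * L + M * B * K + L * B * K)
    (hgam : gam = Lᵀ * B * K + Kᵀ * Bᵀ * L)
    (Ψ Pcal : Matrix (Fin n ⊕ Fin n) (Fin n ⊕ Fin n) ℝ)
    (hΨ : Ψ = fromBlocks (A - B * K) (B * K) (A - B * K) (B * K))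
    (hPcal : Pcal = fromBlocks P 0 0 0)
    (ξk : (Fin n ⊕ Fin n) → ℝ) (tk : ℝ)
    (ξ : ℝ → (Fin n ⊕ Fin n) → ℝ) (hξ : ξ = fun t => (exp ((t - tk) • Ψ)) *ᵥ ξk)
    (V : ℝ → ℝ) (hV : V = fun t => ξ t ⬝ᵥ (Pcal *ᵥ ξ t)) :
    Differentiable ℝ V ∧
      ∀ t : ℝ, HasDerivAt (deriv V) (ξ t ⬝ᵥ (fromBlocks Lam Gam Gamᵀ gam *ᵥ ξ t)) t := by
  letI : NormedRing (Matrix (Fin n ⊕ Fin n) (Fin n ⊕ Fin n) ℝ) := Matrix.linftyOpNormedRing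
  letI : NormedAlgebra ℝ (Matrix (Fin n ⊕ Fin n) (Fin n ⊕ Fin n) ℝ) := Matrix.linftyOpNormedAlgebra
  letI : CompleteSpace (Matrix (Fin n ⊕ Fin n) (Fin n ⊕ Fin n) ℝ) := FiniteDimensional.complete ℝ _
  -- derivative of ξ
  have hξd : ∀ t, HasDerivAt ξ (Ψ *ᵥ ξ t) t := by
    intro t
    have hexp : HasDerivAt (fun u : ℝ => exp (u • Ψ)) (Ψ * exp ((t - tk) • Ψ)) (t - tk) :=
      hasDerivAt_exp_smul_const' Ψ (t - tk)
    have hsub : HasDerivAt (fun u : ℝ => u - tk) 1 t := (hasDerivAt_id t).sub_const tk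
    have h1 : HasDerivAt (fun u : ℝ => exp ((u - tk) • Ψ)) (Ψ * exp ((t - tk) • Ψ)) t := by
      have h := hexp.scomp t hsub
      simp only [one_smul, Function.comp_def] at h
      exact h
    let lm : Matrix (Fin n ⊕ Fin n) (Fin n ⊕ Fin n) ℝ →ₗ[ℝ] ((Fin n ⊕ Fin n) → ℝ) :=
      { toFun := fun N => N *ᵥ ξk
        map_add' := fun N N' => Matrix.add_mulVec N N' ξk
        map_smul' := fun c N => Matrix.smul_mulVec c N ξk }
    have hclm := (LinearMap.toContinuousLinearMap lm).hasFDerivAt.comp_hasDerivAt t h1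
    simp only [LinearMap.coe_toContinuousLinearMap', Function.comp] at hclm
    have : HasDerivAt (fun u => lm (exp ((u - tk) • Ψ))) (lm (Ψ * exp ((t - tk) • Ψ))) t := hclm
    simpa [lm, hξ, LinearMap.coe_mk, ← Matrix.mulVec_mulVec] using this
  -- generic quadratic-form derivative
  have key : ∀ (C : Matrix (Fin n ⊕ Fin n) (Fin n ⊕ Fin n) ℝ) (t : ℝ),
      HasDerivAt (fun t => ξ t ⬝ᵥ (C *ᵥ ξ t)) (ξ t ⬝ᵥ ((Ψᵀ * C + C * Ψ) *ᵥ ξ t)) t := by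
    intro C t
    have hcomp : ∀ i, HasDerivAt (fun t => ξ t i) ((Ψ *ᵥ ξ t) i) t :=
      fun i => hasDerivAt_pi.mp (hξd t) i
    have h2 : HasDerivAt (fun t => ξ t ⬝ᵥ (C *ᵥ ξ t))
        ((Ψ *ᵥ ξ t) ⬝ᵥ (C *ᵥ ξ t) + ξ t ⬝ᵥ (C *ᵥ (Ψ *ᵥ ξ t))) t := by
      have hd := HasDerivAt.fun_sum (u := Finset.univ) fun i (_ : i ∈ Finset.univ) =>
        ((hcomp i).mul (HasDerivAt.fun_sum fun j (_ : j ∈ Finset.univ) => ((hcomp j).const_mul (C i j))))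
      have hfun : (fun t => ξ t ⬝ᵥ (C *ᵥ ξ t))
          = fun t => ∑ i, ξ t i * ∑ j, C i j * ξ t j := by
        funext u; simp [dotProduct, Matrix.mulVec]
      have hder : (Ψ *ᵥ ξ t) ⬝ᵥ (C *ᵥ ξ t) + ξ t ⬝ᵥ (C *ᵥ (Ψ *ᵥ ξ t))
          = ∑ i, ((Ψ *ᵥ ξ t) i * ∑ j, C i j * ξ t j
              + ξ t i * ∑ j, C i j * (Ψ *ᵥ ξ t) j) := by
        rw [Finset.sum_add_distrib]
        congr 1
      rw [hfun, hder]
      exact hd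
    have heq : ξ t ⬝ᵥ ((Ψᵀ * C + C * Ψ) *ᵥ ξ t)
        = (Ψ *ᵥ ξ t) ⬝ᵥ (C *ᵥ ξ t) + ξ t ⬝ᵥ (C *ᵥ (Ψ *ᵥ ξ t)) := by
      rw [Matrix.add_mulVec, dotProduct_add, ← Matrix.mulVec_mulVec,
        ← Matrix.mulVec_mulVec, Matrix.dotProduct_mulVec (ξ t) Ψᵀ, Matrix.vecMul_transpose]
    exact heq ▸ h2
  set Q : Matrix (Fin n ⊕ Fin n) (Fin n ⊕ Fin n) ℝ := Ψᵀ * Pcal + Pcal * Ψ with hQ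
  have hV1 : ∀ t, HasDerivAt V (ξ t ⬝ᵥ (Q *ᵥ ξ t)) t := by
    intro t; rw [hV]; exact key Pcal t
  have hdV : deriv V = fun t => ξ t ⬝ᵥ (Q *ᵥ ξ t) := funext fun t => (hV1 t).deriv
  refine ⟨fun t => (hV1 t).differentiableAt, fun t => ?_⟩
  rw [hdV]
  have h2 := key Q t
  have hblock : Ψᵀ * Q + Q * Ψ = fromBlocks Lam Gam Gamᵀ gam := by
    have hMt : Mᵀ = M := by
      rw [hM]
      simp only [Matrix.transpose_add, Matrix.transpose_mul, Matrix.transpose_transpose, hP]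
      exact add_comm _ _
    have hQ' : Q = fromBlocks M L Lᵀ 0 := by
      rw [hQ, hΨ, hPcal]
      simp only [Matrix.fromBlocks_transpose, Matrix.fromBlocks_multiply, Matrix.fromBlocks_add,
        Matrix.mul_zero, Matrix.zero_mul, add_zero, zero_add]
      refine Matrix.fromBlocks_inj.mpr ⟨?_, ?_, ?_, ?_⟩
      · rw [hM]
      · rw [hL, Matrix.mul_assoc]
      · rw [hL]
        simp only [Matrix.transpose_mul, hP, Matrix.mul_assoc]
      · simp
    rw [hQ', hΨ]
    simp only [Matrix.fromBlocks_transpose, Matrix.fromBlocks_multiply, Matrix.fromBlocks_add,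
      Matrix.mul_zero, Matrix.zero_mul, add_zero, zero_add]
    refine Matrix.fromBlocks_inj.mpr ⟨?_, ?_, ?_, ?_⟩ <;>
      · simp only [hLam, hGam, hgam, Matrix.transpose_add, Matrix.transpose_mul,
          Matrix.transpose_transpose, hMt, Matrix.mul_assoc]
        abel
  rw [← hblock]
  exact h2
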